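/- Let G be an abelian group with no elements of order 2 (that is, x + x = 0 implies x = 0). Then there exists a colouring c : G → ℕ such that for no nontrivial subgroup H ⊆ G and no element a ∈ G is the coset a + H monochromatic for c. -/

import Mathlib

namespace Stmt16

noncomputable section
open Classical Submodule

variable {G : Type*} [AddCommGroup G] [LinearOrder G] [WellFoundedLT G]

/-- The `2`-saturation of a submodule. -/
def sat (A : Submodule ℤ G) : Submodule ℤ G where
  carrier := {x | ∃ n : ℕ, (2 ^ n : ℤ) • x ∈ A}
  add_mem' := by
    rintro x y ⟨n, hn⟩ ⟨m, hm⟩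
    refine ⟨n + m, ?_⟩
    have h1 : (2 ^ (n + m) : ℤ) • x ∈ A := by
      rw [pow_add, mul_comm, mul_smul]; exact A.smul_mem _ hn
    have h2 : (2 ^ (n + m) : ℤ) • y ∈ A := by
      rw [pow_add, mul_smul]; exact A.smul_mem _ hm
    rw [smul_add]; exact A.add_mem h1 h2
  zero_mem' := ⟨0, by simp⟩
  smul_mem' := by
    rintro c x ⟨n, hn⟩
    exact ⟨n, by rw [smul_comm]; exact A.smul_mem c hn⟩

lemma mem_sat {A : Submodule ℤ G} {x : G} :
    x ∈ sat A ↔ ∃ n : ℕ, (2 ^ n : ℤ) • x ∈ A := Iff.rfl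

lemma le_sat (A : Submodule ℤ G) : A ≤ sat A := fun x hx => ⟨0, by simpa using hx⟩

lemma sat_mono {A B : Submodule ℤ G} (h : A ≤ B) : sat A ≤ sat B := by
  rintro x ⟨n, hn⟩; exact ⟨n, h hn⟩

lemma smul_mem_sat {A : Submodule ℤ G} {x : G} {n : ℕ}
    (h : (2 ^ n : ℤ) • x ∈ sat A) : x ∈ sat A := by
  obtain ⟨m, hm⟩ := h
  refine ⟨m + n, ?_⟩
  rwa [pow_add, mul_smul]

lemma eq_zero_of_pow_smul (h2 : ∀ x : G, x + x = 0 → x = 0) {x : G} {n : ℕ}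
    (h : (2 ^ n : ℤ) • x = 0) : x = 0 := by
  induction n generalizing x with
  | zero => simpa using h
  | succ k ih =>
    have h' : (2 ^ k : ℤ) • ((2 : ℤ) • x) = 0 := by
      rw [← mul_smul, ← pow_succ]; exact h
    have h2x : (2 : ℤ) • x = 0 := ih h'
    exact h2 x (by rw [← two_smul ℤ x]; exact h2x)

/-- The saturated submodule generated by elements strictly below `a`. -/
def Hlt (a : G) : Submodule ℤ G := sat (span ℤ {b | b < a})

/-- The saturated submodule generated by elements at most `a`. -/
def Hle (a : G) : Submodule ℤ G := sat (span ℤ {b | b ≤ a})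

lemma Hle_le_Hlt {a b : G} (hab : a < b) : Hle a ≤ Hlt b :=
  sat_mono (span_mono fun c hc => lt_of_le_of_lt hc hab)

lemma mem_Hle_self (a : G) : a ∈ Hle a := le_sat _ (subset_span (le_refl a))

/-- The level of `x` : the least `a` with `x ∈ Hle a`. -/
def lev (x : G) : G :=
  (wellFounded_lt (α := G)).min {a | x ∈ Hle a} ⟨x, mem_Hle_self x⟩

lemma mem_Hle_lev (x : G) : x ∈ Hle (lev x) :=
  (wellFounded_lt (α := G)).min_mem {a | x ∈ Hle a} ⟨x, mem_Hle_self x⟩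

lemma lev_le_of_mem {x b : G} (h : x ∈ Hle b) : lev x ≤ b :=
  not_lt.mp ((wellFounded_lt (α := G)).not_lt_min {a | x ∈ Hle a} h)
lemma lev_lt_of_mem_Hlt (h2 : ∀ x : G, x + x = 0 → x = 0)
    {x a : G} (hx : x ≠ 0) (h : x ∈ Hlt a) : lev x < a := by
  obtain ⟨n, hn⟩ := h
  obtain ⟨T, hTsub, hT⟩ := mem_span_finite_of_mem_span hn
  rcases T.eq_empty_or_nonempty with rfl | hne
  · rw [Finset.coe_empty, span_empty, mem_bot] at hT
    exact absurd (eq_zero_of_pow_smul h2 hT) hx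
  · set c := T.max' hne with hc
    have hca : c < a := hTsub (T.max'_mem hne)
    have hxc : x ∈ Hle c := ⟨n, span_mono (fun b hb => T.le_max' b hb) hT⟩
    exact lt_of_le_of_lt (lev_le_of_mem hxc) hca

lemma code_spec (x : G) :
    ∃ p : ℕ × ℤ, (2 ^ p.1 : ℤ) • x - p.2 • lev x ∈ Hlt (lev x) := by
  obtain ⟨n, hn⟩ := mem_Hle_lev x
  have hset : {b | b ≤ lev x} = {b | b < lev x} ∪ {lev x} := by
    ext b; simp [le_iff_lt_or_eq, or_comm]
  rw [hset, span_union] at hn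
  obtain ⟨y, hy, w, hw, hyw⟩ := Submodule.mem_sup.mp hn
  obtain ⟨m, rfl⟩ := Submodule.mem_span_singleton.mp hw
  refine ⟨(n, m), ?_⟩
  have : (2 ^ n : ℤ) • x - m • lev x = y := by rw [← hyw]; abel
  rw [this]
  exact le_sat _ hy

/-- A code for `x` relative to its level. -/
def code (x : G) : ℕ × ℤ := (code_spec x).choose

lemma code_mem (x : G) :
    (2 ^ (code x).1 : ℤ) • x - (code x).2 • lev x ∈ Hlt (lev x) :=
  (code_spec x).choose_spec

lemma sub_mem_of_code_eq {x z : G} (hl : lev x = lev z) (hc : code x = code z) :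
    x - z ∈ Hlt (lev x) := by
  have h1 := code_mem x
  have h2' := code_mem z
  rw [← hl, ← hc] at h2'
  have hsub : (2 ^ (code x).1 : ℤ) • (x - z) ∈ Hlt (lev x) := by
    have := (Hlt (lev x)).sub_mem h1 h2'
    simpa [smul_sub] using this
  exact smul_mem_sat hsub

/-- A canonical element of a given level and code. -/
def deltaAux (a : G) (p : ℕ × ℤ) : G :=
  if h : ∃ u : G, u ≠ 0 ∧ lev u = a ∧ code u = p then h.choose else 0

def delta (x : G) : G := deltaAux (lev x) (code x)

lemma delta_congr {x y : G} (hl : lev x = lev y) (hc : code x = code y) :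
    delta x = delta y := by rw [delta, delta, hl, hc]

variable (h2 : ∀ x : G, x + x = 0 → x = 0)

lemma sub_delta_mem {x : G} (hx : x ≠ 0) : x - delta x ∈ Hlt (lev x) := by
  have h : ∃ u : G, u ≠ 0 ∧ lev u = lev x ∧ code u = code x := ⟨x, hx, rfl, rfl⟩
  rw [delta, deltaAux, dif_pos h]
  obtain ⟨-, hu2, hu3⟩ := h.choose_spec
  exact sub_mem_of_code_eq hu2.symm hu3.symm

/-- The colour of `x` : the list of codes along its level filtration. -/
def sig : G → List (ℕ × ℤ) :=
  WellFounded.fix (InvImage.wf lev (wellFounded_lt (α := G))) fun x IH =>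
    if hx : x = 0 then []
    else
      (if hx' : x - delta x = 0 then []
       else IH (x - delta x) (lev_lt_of_mem_Hlt h2 hx' (sub_delta_mem hx))) ++ [code x]

lemma sig_zero : sig h2 (0 : G) = [] := by
  rw [sig, WellFounded.fix_eq]
  simp

lemma sig_apply {x : G} (hx : x ≠ 0) :
    sig h2 x = sig h2 (x - delta x) ++ [code x] := by
  conv_lhs => rw [sig, WellFounded.fix_eq]
  dsimp only
  rw [dif_neg hx]
  congr 1
  split_ifs with h
  · rw [h, sig_zero]
  · rfl

lemma eq_zero_of_sig_eq_nil {x : G} (h : sig h2 x = []) : x = 0 := by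
  by_contra hx
  rw [sig_apply h2 hx] at h
  simp at h

lemma main_lemma : ∀ L : List (ℕ × ℤ), ∀ x y z : G,
    sig h2 x = L → sig h2 y = L → sig h2 z = L → x + z = y + y → x = y ∧ y = z := by
  intro L
  induction L using List.reverseRecOn with
  | nil =>
    intro x y z hx hy hz _
    rw [eq_zero_of_sig_eq_nil h2 hx, eq_zero_of_sig_eq_nil h2 hy,
      eq_zero_of_sig_eq_nil h2 hz]
    exact ⟨rfl, rfl⟩
  | append_singleton L₀ e IH =>
    intro x y z hsx hsy hsz hsum
    have hx : x ≠ 0 := by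
      rintro rfl; rw [sig_zero] at hsx; exact (List.append_ne_nil_of_right_ne_nil L₀ (by simp)) hsx.symm
    have hy : y ≠ 0 := by
      rintro rfl; rw [sig_zero] at hsy; exact (List.append_ne_nil_of_right_ne_nil L₀ (by simp)) hsy.symm
    have hz : z ≠ 0 := by
      rintro rfl; rw [sig_zero] at hsz; exact (List.append_ne_nil_of_right_ne_nil L₀ (by simp)) hsz.symm
    rw [sig_apply h2 hx] at hsx
    rw [sig_apply h2 hy] at hsy
    rw [sig_apply h2 hz] at hsz
    obtain ⟨hx0, hxe⟩ := List.append_inj' hsx rfl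
    obtain ⟨hy0, hye⟩ := List.append_inj' hsy rfl
    obtain ⟨hz0, hze⟩ := List.append_inj' hsz rfl
    have hcx : code x = e := by simpa using hxe
    have hcy : code y = e := by simpa using hye
    have hcz : code z = e := by simpa using hze
    -- claim A : the level of `x` (resp. `z`) cannot be strictly largest
    have claimA : ∀ u v w : G, u + w = v + v → u ≠ 0 →
        lev v < lev u → lev w < lev u → False := by
      intro u v w hs hu h1 h2'
      have hv : v + v ∈ Hlt (lev u) :=
        (Hlt (lev u)).add_mem (Hle_le_Hlt h1 (mem_Hle_lev v)) (Hle_le_Hlt h1 (mem_Hle_lev v))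
      have hw : w ∈ Hlt (lev u) := Hle_le_Hlt h2' (mem_Hle_lev w)
      have hu' : u ∈ Hlt (lev u) := by
        have h4 := (Hlt (lev u)).sub_mem hv hw
        have h5 : (v + v) - w = u := by rw [← hs]; abel
        rwa [h5] at h4
      exact lt_irrefl _ (lev_lt_of_mem_Hlt h2 hu hu')
    -- claim B : the level of `y` cannot be strictly largest
    have claimB : lev x < lev y → lev z < lev y → False := by
      intro h1 h2'
      have hxm : x ∈ Hlt (lev y) := Hle_le_Hlt h1 (mem_Hle_lev x)
      have hzm : z ∈ Hlt (lev y) := Hle_le_Hlt h2' (mem_Hle_lev z)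
      have hsumm : (2 ^ 1 : ℤ) • y ∈ Hlt (lev y) := by
        have h22 : (2 ^ 1 : ℤ) • y = y + y := by
          rw [pow_one, two_smul]
        rw [h22, ← hsum]; exact (Hlt (lev y)).add_mem hxm hzm
      have : y ∈ Hlt (lev y) := smul_mem_sat hsumm
      exact lt_irrefl _ (lev_lt_of_mem_Hlt h2 hy this)
    -- claim C : `x` and `z` cannot share the strictly largest level
    have claimC : lev x = lev z → lev y < lev x → False := by
      intro hxz h1
      have hsub : x - z ∈ Hlt (lev x) :=
        sub_mem_of_code_eq hxz (hcx.trans hcz.symm)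
      have hadd : x + z ∈ Hlt (lev x) := by
        rw [hsum]
        exact (Hlt (lev x)).add_mem (Hle_le_Hlt h1 (mem_Hle_lev y))
          (Hle_le_Hlt h1 (mem_Hle_lev y))
      have h2x : (2 ^ 1 : ℤ) • x ∈ Hlt (lev x) := by
        have : (2 ^ 1 : ℤ) • x = (x - z) + (x + z) := by rw [pow_one, two_smul]; abel
        rw [this]; exact (Hlt (lev x)).add_mem hsub hadd
      have : x ∈ Hlt (lev x) := smul_mem_sat h2x
      exact lt_irrefl _ (lev_lt_of_mem_Hlt h2 hx this)
    -- claim D : `u` and `y` cannot share the strictly largest level (`u` one of `x, z`)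
    have claimD : ∀ u w : G, u + w = y + y → code u = code w → lev u = lev y →
        code u = code y → lev w < lev u → False := by
      intro u w hs _ hxy hcuy hw
      have hsub : u - y ∈ Hlt (lev u) := sub_mem_of_code_eq hxy hcuy
      have hwm : w ∈ Hlt (lev u) := Hle_le_Hlt hw (mem_Hle_lev w)
      have hym : y ∈ Hlt (lev u) := by
        have h4 := (Hlt (lev u)).add_mem hsub hwm
        have h5 : (u - y) + w = y := by
          have h6 : u + w - y = y := by rw [hs]; abel
          calc (u - y) + w = u + w - y := by abel
            _ = y := h6
        rwa [h5] at h4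
      have := lev_lt_of_mem_Hlt h2 hy hym
      rw [← hxy] at this
      exact lt_irrefl _ this
    have hsum' : z + x = y + y := by rw [add_comm]; exact hsum
    -- all three levels are equal
    have hlev : lev x = lev y ∧ lev x = lev z := by
      rcases lt_trichotomy (lev x) (lev y) with h1 | h1 | h1
      · rcases lt_trichotomy (lev z) (lev y) with h2' | h2' | h2'
        · exact absurd (claimB h1 h2') id
        · exact absurd (claimD z x hsum' (hcz.trans hcx.symm) h2' (hcz.trans hcy.symm)
            (h2' ▸ h1)) id
        · exact absurd (claimA z y x hsum' hz h2' (h1.trans h2')) id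
      · rcases lt_trichotomy (lev z) (lev x) with h2' | h2' | h2'
        · exact absurd (claimD x z hsum (hcx.trans hcz.symm) h1 (hcx.trans hcy.symm) h2') id
        · exact ⟨h1, h2'.symm⟩
        · exact absurd (claimA z y x hsum' hz (h1 ▸ h2') h2') id
      · rcases lt_trichotomy (lev z) (lev x) with h2' | h2' | h2'
        · exact absurd (claimA x y z hsum hx h1 h2') id
        · exact absurd (claimC h2'.symm h1) id
        · exact absurd (claimA z y x hsum' hz (h1.trans h2') h2') id
    obtain ⟨hlxy, hlxz⟩ := hlev
    -- same delta
    have hdxy : delta x = delta y := delta_congr hlxy (hcx.trans hcy.symm)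
    have hdxz : delta x = delta z := delta_congr hlxz (hcx.trans hcz.symm)
    set d := delta x with hd
    have hsx' : sig h2 (x - d) = L₀ := hx0
    have hsy' : sig h2 (y - d) = L₀ := by rw [show d = delta y from hdxy]; exact hy0
    have hsz' : sig h2 (z - d) = L₀ := by rw [show d = delta z from hdxz]; exact hz0
    have hsum'' : (x - d) + (z - d) = (y - d) + (y - d) := by
      have : (x + z) - (d + d) = (y + y) - (d + d) := by rw [hsum]
      calc (x - d) + (z - d) = (x + z) - (d + d) := by abel
        _ = (y + y) - (d + d) := by rw [hsum]
        _ = (y - d) + (y - d) := by abel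
    obtain ⟨e1, e2⟩ := IH (x - d) (y - d) (z - d) hsx' hsy' hsz' hsum''
    exact ⟨by rwa [sub_left_inj] at e1, by rwa [sub_left_inj] at e2⟩

end

end Stmt16

/-- If `G` is an abelian group with no elements of order `2`, then
there is a colouring `c : G → ℕ` such that for no nontrivial subgroup `H ⊆ G` and no
`a ∈ G` is the coset `a + H` monochromatic. -/
theorem stmt_16 (G : Type*) [AddCommGroup G] (h2 : ∀ x : G, x + x = 0 → x = 0) :
    ∃ c : G → ℕ, ∀ H : AddSubgroup G, H ≠ ⊥ → ∀ a : G,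
      ¬ ∃ k, ∀ h ∈ H, c (a + h) = k := by
  classical
  letI : LinearOrder G := IsWellOrder.linearOrder WellOrderingRel
  haveI : WellFoundedLT G := inferInstanceAs (IsWellFounded G WellOrderingRel)
  refine ⟨fun g => Encodable.encode (Stmt16.sig h2 g), ?_⟩
  rintro H hH a ⟨k, hk⟩
  obtain ⟨h, hhH, hh0⟩ : ∃ h ∈ H, h ≠ 0 := by
    by_contra hc
    push_neg at hc
    exact hH (by ext g; simp only [AddSubgroup.mem_bot]; exact ⟨fun hg => hc g hg, by rintro rfl; exact H.zero_mem⟩)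
  have e1 : Stmt16.sig h2 (a + h) = Stmt16.sig h2 a := by
    have := (hk h hhH).trans (hk 0 H.zero_mem).symm
    rw [add_zero] at this
    exact Encodable.encode_injective this
  have e2 : Stmt16.sig h2 (a + -h) = Stmt16.sig h2 a := by
    have := (hk (-h) (H.neg_mem hhH)).trans (hk 0 H.zero_mem).symm
    rw [add_zero] at this
    exact Encodable.encode_injective this
  have hsum : (a + h) + (a + -h) = a + a := by abel
  obtain ⟨e, -⟩ := Stmt16.main_lemma h2 (Stmt16.sig h2 a) (a + h) a (a + -h) e1 rfl e2 hsum
  exact hh0 (by simpa using e)
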